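/- In the free left distributive algebra on one generator x, the relation <_L is not well-founded: there is an infinite strictly descending sequence under <_L. -/
import Mathlib


/-- Terms in one generator x with a binary operation ·. -/
inductive LDTerm : Type
  | x : LDTerm
  | mul : LDTerm → LDTerm → LDTerm

/-- The congruence generated by the left distributive law. -/
inductive LDEq : LDTerm → LDTerm → Prop
  | ld (a b c : LDTerm) :
      LDEq (LDTerm.mul a (LDTerm.mul b c)) (LDTerm.mul (LDTerm.mul a b) (LDTerm.mul a c))
  | refl (a : LDTerm) : LDEq a a
  | symm {a b : LDTerm} : LDEq a b → LDEq b a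
  | trans {a b c : LDTerm} : LDEq a b → LDEq b c → LDEq a c
  | congr {a b c d : LDTerm} : LDEq a b → LDEq c d → LDEq (LDTerm.mul a c) (LDTerm.mul b d)

instance LDTerm.setoid : Setoid LDTerm :=
  ⟨LDEq, LDEq.refl, LDEq.symm, LDEq.trans⟩

/-- The free left distributive algebra on one generator. -/
def FreeLD : Type := Quotient LDTerm.setoid

/-- The generator x of the free left distributive algebra. -/
def FreeLD.x : FreeLD := ⟦LDTerm.x⟧

/-- Multiplication on the free left distributive algebra. -/
def FreeLD.mul : FreeLD → FreeLD → FreeLD :=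
  Quotient.map₂ LDTerm.mul fun _ _ h _ _ h' => LDEq.congr h h'

/-- a <_L b : b = a·c₀·c₁·...·c_n (left association) for some n ≥ 0. -/
def FreeLD.ltL (a b : FreeLD) : Prop :=
  ∃ (c : FreeLD) (l : List FreeLD), b = List.foldl FreeLD.mul (FreeLD.mul a c) l


/-- Left powers of the generator: `pow 0 = x`, `pow (n+1) = pow n · x`. -/
def LDTerm.pow : ℕ → LDTerm
  | 0 => LDTerm.x
  | n + 1 => LDTerm.mul (LDTerm.pow n) LDTerm.x

/-- The index walk: from `(n, k+2)` go to `(n, k+1)`; from `(n, k≤1)` go to `(n+1, n)`. -/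
def LDStep : ℕ × ℕ → ℕ × ℕ
  | (n, k + 2) => (n, k + 1)
  | (n, _) => (n + 1, n)

def LDPair : ℕ → ℕ × ℕ
  | 0 => (1, 1)
  | i + 1 => LDStep (LDPair i)

lemma LDPair_pos (i : ℕ) : 1 ≤ (LDPair i).1 ∧ 1 ≤ (LDPair i).2 := by
  induction i with
  | zero => exact ⟨le_refl 1, le_refl 1⟩
  | succ i ih =>
    show 1 ≤ (LDStep (LDPair i)).1 ∧ 1 ≤ (LDStep (LDPair i)).2
    rcases hp : LDPair i with ⟨n, k⟩
    rw [hp] at ih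
    obtain ⟨h1, h2⟩ := ih
    match k, h2 with
    | 0, h => exact absurd h (by omega)
    | 1, _ => exact ⟨Nat.le_succ_of_le h1, h1⟩
    | k + 2, _ => exact ⟨h1, Nat.le_add_left 1 k⟩

/-- The key one-step descent at the level of terms. -/
lemma LDStep_key (n k : ℕ) (_hn : 1 ≤ n) (hk : 1 ≤ k) :
    ∃ c : LDTerm,
      LDEq (LDTerm.mul (LDTerm.pow n) (LDTerm.pow k))
        (LDTerm.mul
          (LDTerm.mul (LDTerm.pow (LDStep (n, k)).1) (LDTerm.pow (LDStep (n, k)).2)) c) := by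
  match k, hk with
  | 0, h => exact absurd h (by omega)
  | 1, _ =>
    -- pow n · (x·x) ≡ (pow n · x)·(pow n · x) = pow (n+1) · (pow n · x)
    --              ≡ (pow (n+1) · pow n) · (pow (n+1) · x) = (pow (n+1) · pow n) · pow (n+2)
    refine ⟨LDTerm.pow (n + 2), ?_⟩
    show LDEq (LDTerm.mul (LDTerm.pow n) (LDTerm.mul LDTerm.x LDTerm.x))
      (LDTerm.mul (LDTerm.mul (LDTerm.pow (n + 1)) (LDTerm.pow n)) (LDTerm.pow (n + 2)))
    exact LDEq.trans (LDEq.ld (LDTerm.pow n) LDTerm.x LDTerm.x)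
      (LDEq.ld (LDTerm.pow (n + 1)) (LDTerm.pow n) LDTerm.x)
  | k + 2, _ =>
    -- pow n · (pow (k+1) · x) ≡ (pow n · pow (k+1)) · (pow n · x)
    exact ⟨LDTerm.pow (n + 1), LDEq.ld (LDTerm.pow n) (LDTerm.pow (k + 1)) LDTerm.x⟩

/-- <_L is not well-founded on the free left distributive algebra: there is an
infinite strictly <_L-descending sequence. -/
theorem FreeLD.ltL_not_wellFounded :
    ∃ f : ℕ → FreeLD, ∀ n, FreeLD.ltL (f (n + 1)) (f n) := by
  refine ⟨fun i => ⟦LDTerm.mul (LDTerm.pow (LDPair i).1) (LDTerm.pow (LDPair i).2)⟧, fun i => ?_⟩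
  obtain ⟨hn, hk⟩ := LDPair_pos i
  obtain ⟨c, hc⟩ := LDStep_key (LDPair i).1 (LDPair i).2 hn hk
  refine ⟨⟦c⟧, [], ?_⟩
  show _ = FreeLD.mul ⟦LDTerm.mul (LDTerm.pow (LDPair (i + 1)).1) (LDTerm.pow (LDPair (i + 1)).2)⟧ ⟦c⟧
  have hstep : LDPair (i + 1) = LDStep (LDPair i) := rfl
  rw [hstep]
  have hmk : FreeLD.mul ⟦LDTerm.mul (LDTerm.pow ((LDStep (LDPair i)).1)) (LDTerm.pow ((LDStep (LDPair i)).2))⟧ ⟦c⟧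
      = ⟦LDTerm.mul (LDTerm.mul (LDTerm.pow ((LDStep (LDPair i)).1)) (LDTerm.pow ((LDStep (LDPair i)).2))) c⟧ := rfl
  rw [hmk]
  exact Quotient.sound (by
    have := hc
    rw [show ((LDPair i).1, (LDPair i).2) = LDPair i from rfl] at this
    exact this)
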